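/- Let −1 < α < β < 1 with α + β ≠ 0 and αβ > −1/n, n ≥ 1. Let Δ = n²(β²−α²)² + 4(1−α²)(1−β²) and τ = (n(β+α)² + 2(1+αβ) − √Δ) / (2(n+1)(β+α)). Then τ is a root of the quadratic (n+1)(α+β)τ² − (n(α+β)² + 2(1+αβ))τ + (α+β)(1+nαβ) = 0, and α < τ < β. -/

import Mathlib

/-- The parameter `τ` of the minimum volume circumscribed ellipsoid of a slab in case (iii):
`τ` as defined (with the minus sign in front of `√Δ`) is a root of the quadratic
`(n+1)(α+β)τ² − (n(α+β)² + 2(1+αβ))τ + (α+β)(1+nαβ) = 0` and satisfies `α < τ < β`. -/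
theorem slab_tau_root_and_bounds
    (n : ℕ) (hn : 1 ≤ n) (α β : ℝ)
    (h1 : -1 < α) (h2 : α < β) (h3 : β < 1)
    (hsum : α + β ≠ 0) (hab : α * β > -(1 / n)) (hsq : α ^ 2 ≤ β ^ 2)
    (Δ τ : ℝ)
    (hΔ : Δ = (n : ℝ) ^ 2 * (β ^ 2 - α ^ 2) ^ 2 + 4 * (1 - α ^ 2) * (1 - β ^ 2))
    (hτ : τ = ((n : ℝ) * (β + α) ^ 2 + 2 * (1 + α * β) - Real.sqrt Δ)
        / (2 * ((n : ℝ) + 1) * (β + α))) :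
    ((n : ℝ) + 1) * (α + β) * τ ^ 2 - ((n : ℝ) * (α + β) ^ 2 + 2 * (1 + α * β)) * τ
        + (α + β) * (1 + (n : ℝ) * α * β) = 0
      ∧ α < τ ∧ τ < β := by
  have hn1 : (1 : ℝ) ≤ (n : ℝ) := by exact_mod_cast hn
  have ha1 : 0 < 1 - α ^ 2 := by nlinarith
  have hb1 : 0 < 1 - β ^ 2 := by nlinarith
  -- β + α > 0
  have hba : 0 < β + α := by
    rcases lt_trichotomy (β + α) 0 with h | h | h
    · nlinarith
    · exact absurd (by linarith : α + β = 0) hsum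
    · exact h
  have hsq' : 0 < β ^ 2 - α ^ 2 := by nlinarith
  have hΔpos : 0 < Δ := by rw [hΔ]; nlinarith [sq_nonneg ((n : ℝ) * (β ^ 2 - α ^ 2))]
  set s := Real.sqrt Δ with hs
  have hs0 : 0 < s := Real.sqrt_pos.mpr hΔpos
  have hs2 : s ^ 2 = Δ := Real.sq_sqrt hΔpos.le
  have hA : (2 * ((n : ℝ) + 1) * (β + α)) ≠ 0 := by positivity
  have hτ' : τ * (2 * ((n : ℝ) + 1) * (β + α))
      = (n : ℝ) * (β + α) ^ 2 + 2 * (1 + α * β) - s := by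
    rw [hτ]; field_simp
  -- root
  have hroot : ((n : ℝ) + 1) * (α + β) * τ ^ 2 - ((n : ℝ) * (α + β) ^ 2 + 2 * (1 + α * β)) * τ
      + (α + β) * (1 + (n : ℝ) * α * β) = 0 := by
    have key : (((n : ℝ) + 1) * (α + β) * τ ^ 2 - ((n : ℝ) * (α + β) ^ 2 + 2 * (1 + α * β)) * τ
        + (α + β) * (1 + (n : ℝ) * α * β)) * (2 * ((n : ℝ) + 1) * (β + α)) ^ 2 = 0 := by
      linear_combination (((n : ℝ) + 1) * (β + α)) *
          (τ * (2 * ((n : ℝ) + 1) * (β + α)) + ((n : ℝ) * (β + α) ^ 2 + 2 * (1 + α * β) - s)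
            - 2 * ((n : ℝ) * (β + α) ^ 2 + 2 * (1 + α * β))) * hτ'
        + (((n : ℝ) + 1) * (β + α)) * hs2
        + (((n : ℝ) + 1) * (β + α)) * hΔ
    rcases mul_eq_zero.mp key with h | h
    · exact h
    · exact absurd h (pow_ne_zero 2 hA)
  refine ⟨hroot, ?_, ?_⟩
  · -- α < τ : need s < n(β²−α²) + 2(1−α²)
    have hE1 : 0 < (n : ℝ) * (β ^ 2 - α ^ 2) + 2 * (1 - α ^ 2) := by nlinarith
    have hdiff : ((n : ℝ) * (β ^ 2 - α ^ 2) + 2 * (1 - α ^ 2)) ^ 2 - s ^ 2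
        = 4 * ((n : ℝ) + 1) * (1 - α ^ 2) * (β ^ 2 - α ^ 2) := by
      rw [hs2, hΔ]; ring
    have hpos : 0 < 4 * ((n : ℝ) + 1) * (1 - α ^ 2) * (β ^ 2 - α ^ 2) := by positivity
    have hlt : s < (n : ℝ) * (β ^ 2 - α ^ 2) + 2 * (1 - α ^ 2) :=
      lt_of_pow_lt_pow_left₀ 2 hE1.le (by linarith)
    have hid : (n : ℝ) * (β + α) ^ 2 + 2 * (1 + α * β)
        - ((n : ℝ) * (β ^ 2 - α ^ 2) + 2 * (1 - α ^ 2))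
        = α * (2 * ((n : ℝ) + 1) * (β + α)) := by ring
    have hmul : α * (2 * ((n : ℝ) + 1) * (β + α)) < τ * (2 * ((n : ℝ) + 1) * (β + α)) := by
      rw [hτ']; linarith
    exact lt_of_mul_lt_mul_right hmul (by positivity)
  · -- τ < β : need 2(1−β²) − n(β²−α²) < s
    have hdiff : s ^ 2 - (2 * (1 - β ^ 2) - (n : ℝ) * (β ^ 2 - α ^ 2)) ^ 2
        = 4 * ((n : ℝ) + 1) * (1 - β ^ 2) * (β ^ 2 - α ^ 2) := by
      rw [hs2, hΔ]; ring
    have hpos : 0 < 4 * ((n : ℝ) + 1) * (1 - β ^ 2) * (β ^ 2 - α ^ 2) := by positivity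
    have hlt : 2 * (1 - β ^ 2) - (n : ℝ) * (β ^ 2 - α ^ 2) < s :=
      lt_of_pow_lt_pow_left₀ 2 hs0.le (by linarith)
    have hid : (n : ℝ) * (β + α) ^ 2 + 2 * (1 + α * β)
        - (2 * (1 - β ^ 2) - (n : ℝ) * (β ^ 2 - α ^ 2))
        = β * (2 * ((n : ℝ) + 1) * (β + α)) := by ring
    have hmul : τ * (2 * ((n : ℝ) + 1) * (β + α)) < β * (2 * ((n : ℝ) + 1) * (β + α)) := by
      rw [hτ']; linarith
    exact lt_of_mul_lt_mul_right hmul (by positivity)
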